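/- Define μ_A = ∑_{B ⊆ X : |A ∩ B| odd} w̃_B when |A| is even, and μ_A = 0 when |A| is odd. Then for every A ⊆ X one has μ_A = ∑_{B ⊆ A} (−2)^{|B|−2} δ_B, and for every B ⊆ X one has δ_B = 2^{−(|B|−2)} ∑_{A ⊆ B} μ_A. -/

import Mathlib

open Finset

section Aux
variable {α : Type*} [DecidableEq α]

lemma sum_pow_card' (x : ℝ) (s : Finset α) :
    ∑ t ∈ s.powerset, x ^ t.card = (x + 1) ^ s.card := by
  induction s using Finset.induction_on with
  | empty => simp
  | insert a s ha ih =>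
    rw [sum_powerset_insert ha, ih, card_insert_of_notMem ha]
    have h : ∀ t ∈ s.powerset, x ^ (insert a t).card = x * x ^ t.card := by
      intro t ht
      rw [card_insert_of_notMem (fun h => ha (mem_powerset.mp ht h)), pow_succ]
      ring
    rw [sum_congr rfl h, ← mul_sum, ih, pow_succ]
    ring

/-- ∑ over nonempty subsets of (-2)^card -/
lemma sum_f (s : Finset α) :
    ∑ t ∈ s.powerset, (if t.Nonempty then (-2 : ℝ) ^ t.card else 0)
      = (-1 : ℝ) ^ s.card - 1 := by
  have h : ∀ t ∈ s.powerset,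
      (if t.Nonempty then (-2 : ℝ) ^ t.card else 0)
        = (-2 : ℝ) ^ t.card - (if t = ∅ then 1 else 0) := by
    intro t _
    rcases t.eq_empty_or_nonempty with rfl | ht
    · simp
    · rw [if_pos ht, if_neg ht.ne_empty, sub_zero]
  rw [sum_congr rfl h, sum_sub_distrib, sum_pow_card', sum_ite_eq' _ (∅ : Finset α),
    if_pos (empty_mem_powerset s)]
  norm_num

/-- ∑ over odd-card subsets of 1 -/
lemma sum_g (s : Finset α) :
    ∑ t ∈ s.powerset, (if Odd t.card then (1 : ℝ) else 0)
      = ((2 : ℝ) ^ s.card - (0 : ℝ) ^ s.card) / 2 := by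
  have h : ∀ t ∈ s.powerset,
      (if Odd t.card then (1 : ℝ) else 0)
        = ((1 : ℝ) ^ t.card - (-1 : ℝ) ^ t.card) / 2 := by
    intro t _
    rcases Nat.even_or_odd t.card with ht | ht
    · rw [if_neg (Nat.not_odd_iff_even.mpr ht), ht.neg_one_pow, one_pow]
      norm_num
    · rw [if_pos ht, ht.neg_one_pow, one_pow]
      norm_num
  rw [sum_congr rfl h, ← sum_div, sum_sub_distrib, sum_pow_card', sum_pow_card']
  norm_num

lemma neg2_zpow (n : ℕ) : (-2 : ℝ) ^ ((n : ℤ) - 2) = 1 / 4 * (-2 : ℝ) ^ n := by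
  rw [zpow_sub₀ (by norm_num : (-2 : ℝ) ≠ 0), zpow_natCast]
  have h : (-2 : ℝ) ^ (2 : ℤ) = 4 := by norm_num
  rw [h]; ring

lemma two_zpow (n : ℕ) : (2 : ℝ) ^ ((n : ℤ) - 2) = (2 : ℝ) ^ n / 4 := by
  rw [zpow_sub₀ (by norm_num : (2 : ℝ) ≠ 0), zpow_natCast]
  norm_num

lemma powerset_split (S C : Finset α) (f g : Finset α → ℝ) :
    ∑ B ∈ S.powerset, f (B ∩ C) * g (B \ C)
      = (∑ B₁ ∈ (S ∩ C).powerset, f B₁) * (∑ B₂ ∈ (S \ C).powerset, g B₂) := by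
  rw [sum_mul_sum, ← sum_product']
  refine sum_nbij' (fun B => (B ∩ C, B \ C)) (fun p => p.1 ∪ p.2) ?_ ?_ ?_ ?_ ?_
  · intro B hB
    rw [mem_powerset] at hB
    rw [mem_product, mem_powerset, mem_powerset]
    exact ⟨inter_subset_inter hB Subset.rfl, sdiff_subset_sdiff hB Subset.rfl⟩
  · intro p hp
    rw [mem_product, mem_powerset, mem_powerset] at hp
    rw [mem_powerset]
    exact union_subset (hp.1.trans inter_subset_left) (hp.2.trans sdiff_subset)
  · intro B _
    ext x; simp; tauto
  · intro p hp
    rw [mem_product, mem_powerset, mem_powerset] at hp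
    have h1 : ∀ x ∈ p.1, x ∈ C := fun x hx => mem_of_mem_inter_right (hp.1 hx)
    have h2 : ∀ x ∈ p.2, x ∉ C := fun x hx => (mem_sdiff.mp (hp.2 hx)).2
    ext x
    · simp only [mem_inter, mem_union]
      constructor
      · rintro ⟨h | h, hc⟩
        · exact h
        · exact absurd hc (h2 x h)
      · exact fun h => ⟨Or.inl h, h1 x h⟩
    · simp only [mem_sdiff, mem_union]
      constructor
      · rintro ⟨h | h, hc⟩
        · exact absurd (h1 x h) hc
        · exact h
      · exact fun h => ⟨Or.inr h, h2 x h⟩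
  · intro B _; rfl

lemma coeff1 (A C : Finset α) :
    (∑ B ∈ A.powerset,
        if (B ∩ C).Nonempty ∧ (B \ C).Nonempty then (-2 : ℝ) ^ ((B.card : ℤ) - 2) else 0)
      = if Even A.card ∧ Odd (A ∩ C).card then 1 else 0 := by
  have hterm : ∀ B ∈ A.powerset,
      (if (B ∩ C).Nonempty ∧ (B \ C).Nonempty then (-2 : ℝ) ^ ((B.card : ℤ) - 2) else 0)
        = 1 / 4 * ((if (B ∩ C).Nonempty then (-2 : ℝ) ^ (B ∩ C).card else 0)
            * (if (B \ C).Nonempty then (-2 : ℝ) ^ (B \ C).card else 0)) := by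
    intro B _
    have hc : (B ∩ C).card + (B \ C).card = B.card := card_inter_add_card_sdiff B C
    by_cases h1 : (B ∩ C).Nonempty <;> by_cases h2 : (B \ C).Nonempty <;>
      simp only [h1, h2, true_and, and_true, and_false, false_and, if_true, if_false,
        if_pos, if_neg, not_false_iff, mul_zero, zero_mul, mul_zero]
    · rw [neg2_zpow, ← hc, pow_add]
  have hsplit := powerset_split A C (fun t => if t.Nonempty then (-2 : ℝ) ^ t.card else 0)
    (fun t => if t.Nonempty then (-2 : ℝ) ^ t.card else 0)
  simp only at hsplit
  rw [sum_congr rfl hterm, ← mul_sum, hsplit, sum_f, sum_f]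
  have hc : (A ∩ C).card + (A \ C).card = A.card := card_inter_add_card_sdiff A C
  rcases Nat.even_or_odd (A ∩ C).card with ha | ha <;>
    rcases Nat.even_or_odd (A \ C).card with hb | hb
  · rw [ha.neg_one_pow, hb.neg_one_pow, if_neg (fun h => (Nat.not_odd_iff_even.mpr ha) h.2)]
    ring
  · rw [ha.neg_one_pow, hb.neg_one_pow, if_neg (fun h => (Nat.not_odd_iff_even.mpr ha) h.2)]
    ring
  · rw [ha.neg_one_pow, hb.neg_one_pow,
      if_neg (fun h => (Nat.not_even_iff_odd.mpr (hc ▸ ha.add_even hb)) h.1)]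
    ring
  · rw [ha.neg_one_pow, hb.neg_one_pow, if_pos ⟨hc ▸ ha.add_odd hb, ha⟩]
    ring



lemma coeff2 (B C : Finset α) :
    (∑ A ∈ B.powerset, if Even A.card ∧ Odd (A ∩ C).card then (1 : ℝ) else 0)
      = if (B ∩ C).Nonempty ∧ (B \ C).Nonempty then (2 : ℝ) ^ ((B.card : ℤ) - 2) else 0 := by
  have hterm : ∀ A ∈ B.powerset,
      (if Even A.card ∧ Odd (A ∩ C).card then (1 : ℝ) else 0)
        = (if Odd (A ∩ C).card then (1 : ℝ) else 0)
            * (if Odd (A \ C).card then (1 : ℝ) else 0) := by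
    intro A _
    have hc : (A ∩ C).card + (A \ C).card = A.card := card_inter_add_card_sdiff A C
    by_cases h1 : Odd (A ∩ C).card <;> by_cases h2 : Odd (A \ C).card <;>
      simp only [h1, h2, if_true, if_false, mul_one, mul_zero, one_mul]
    · rw [if_pos ⟨hc ▸ h1.add_odd h2, trivial⟩]
    · rw [if_neg]
      rintro ⟨he, -⟩
      exact (Nat.not_even_iff_odd.mpr (hc ▸ h1.add_even (Nat.not_odd_iff_even.mp h2))) he
    · rw [if_neg (fun h => h.2)]
    · rw [if_neg (fun h => h.2)]
  have hsplit := powerset_split B C (fun t => if Odd t.card then (1 : ℝ) else 0)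
    (fun t => if Odd t.card then (1 : ℝ) else 0)
  simp only at hsplit
  rw [sum_congr rfl hterm, hsplit, sum_g, sum_g]
  by_cases h1 : (B ∩ C).Nonempty <;> by_cases h2 : (B \ C).Nonempty
  · rw [if_pos ⟨h1, h2⟩, two_zpow, ← card_inter_add_card_sdiff B C, pow_add,
      zero_pow (card_pos.mpr h1).ne', zero_pow (card_pos.mpr h2).ne']
    ring
  · rw [if_neg (fun h => h2 h.2), not_nonempty_iff_eq_empty.mp h2]
    norm_num
  · rw [if_neg (fun h => h1 h.1), not_nonempty_iff_eq_empty.mp h1]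
    norm_num
  · rw [if_neg (fun h => h1 h.1), not_nonempty_iff_eq_empty.mp h1]
    norm_num

end Aux

/-- Given a symmetrized split weight function `w` (`w B ≥ 0`,
`w B = w Bᶜ`) with phylogenetic diversities
`δ A = ∑_{B : A ∩ B ≠ ∅, A ∖ B ≠ ∅} w B`, define
`μ A = ∑_{B : |A ∩ B| odd} w B` when `|A|` is even, and `μ A = 0` when `|A|` is odd.
Then `μ A = ∑_{B ⊆ A} (−2)^{|B|−2} δ B` for all `A`, and
`δ B = 2^{−(|B|−2)} ∑_{A ⊆ B} μ A` for all `B`. -/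
theorem mu_diversity_transform
    {α : Type*} [Fintype α] [DecidableEq α]
    (w : Finset α → ℝ) (hw : ∀ B : Finset α, 0 ≤ w B)
    (hwsym : ∀ B : Finset α, w B = w Bᶜ)
    (δ : Finset α → ℝ)
    (hδ : ∀ A : Finset α, δ A =
      ∑ B ∈ univ.filter (fun B : Finset α => (A ∩ B).Nonempty ∧ (A \ B).Nonempty), w B)
    (μ : Finset α → ℝ)
    (hμ : ∀ A : Finset α, μ A =
      if Even A.card then
        ∑ B ∈ univ.filter (fun B : Finset α => Odd (A ∩ B).card), w B
      else 0) :
    (∀ A : Finset α, μ A = ∑ B ∈ A.powerset, (-2 : ℝ) ^ ((B.card : ℤ) - 2) * δ B) ∧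
    (∀ B : Finset α, δ B = (2 : ℝ) ^ (-((B.card : ℤ) - 2)) * ∑ A ∈ B.powerset, μ A) := by
  have key : ∀ A : Finset α, μ A =
      ∑ C ∈ univ, (if Even A.card ∧ Odd (A ∩ C).card then (1 : ℝ) else 0) * w C := by
    intro A
    rw [hμ A]
    by_cases h : Even A.card
    · rw [if_pos h, sum_filter]
      refine sum_congr rfl fun C _ => ?_
      by_cases hc : Odd (A ∩ C).card <;> simp [h, hc]
    · rw [if_neg h]
      exact (sum_eq_zero fun C _ => by simp [h]).symm
  have part1 : ∀ A : Finset α, μ A = ∑ B ∈ A.powerset, (-2 : ℝ) ^ ((B.card : ℤ) - 2) * δ B := by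
    intro A
    have h1 : ∀ B ∈ A.powerset, (-2 : ℝ) ^ ((B.card : ℤ) - 2) * δ B
        = ∑ C ∈ univ, (if (B ∩ C).Nonempty ∧ (B \ C).Nonempty
            then (-2 : ℝ) ^ ((B.card : ℤ) - 2) else 0) * w C := by
      intro B _
      rw [hδ B, mul_sum, sum_filter]
      exact sum_congr rfl fun C _ =>
        by by_cases h : (B ∩ C).Nonempty ∧ (B \ C).Nonempty <;> simp [h]
    rw [sum_congr rfl h1, sum_comm, key A]
    refine sum_congr rfl fun C _ => ?_
    rw [← sum_mul, coeff1]
  have part2 : ∀ B : Finset α, ∑ A ∈ B.powerset, μ A = (2 : ℝ) ^ ((B.card : ℤ) - 2) * δ B := by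
    intro B
    rw [sum_congr rfl (fun A _ => key A), sum_comm, hδ B, mul_sum, sum_filter]
    refine sum_congr rfl fun C _ => ?_
    rw [← sum_mul, coeff2]
    by_cases h : (B ∩ C).Nonempty ∧ (B \ C).Nonempty <;> simp [h]
  refine ⟨part1, fun B => ?_⟩
  rw [part2 B, ← mul_assoc, zpow_neg,
    inv_mul_cancel₀ (zpow_ne_zero _ (by norm_num : (2 : ℝ) ≠ 0)), one_mul]
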